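/- Let μ ≥ 2 be an even integer, W a positive integer, V = sin(π/μ)/W, ζ > 0, ω > 0, κ > 0, and c ≥ 0. Let A be a random variable with density f_A(α) = (μ/(2π))·√(V²/(ζα − V²α²)) on [cos²(π/μ)·ζ/V², ζ/V²] (zero elsewhere), and let B̃ be an independent random variable with density f_B(x) = (1/(Φ(ω/κ)·√(2πκ²)))·exp(−(x − ω − c)²/(2κ²)) for x ≥ c (zero elsewhere). Then for every γ > 0 satisfying cos²(π/μ)·ζ/(γV²) ≥ c, the outage probability satisfies P(A/B̃ ≤ γ) = 1/Φ(ω/κ) − (μ/(2π·Φ(ω/κ)))·∫_{cos²(π/μ)·ζ/V²}^{ζ/V²} √(V²/(ζα − V²α²)) · Φ((α/γ − ω − c)/κ) dα. -/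

import Mathlib

open Real MeasureTheory ProbabilityTheory

/-- The standard normal cumulative distribution function
`Φ(x) = (1/√(2π)) ∫_{-∞}^x e^{-y²/2} dy`. -/
noncomputable def stdNormalCDF (x : ℝ) : ℝ :=
  (Real.sqrt (2 * Real.pi))⁻¹ * ∫ y in Set.Iic x, Real.exp (-(y ^ 2) / 2)

lemma stdGauss_eq :
    (fun y : ℝ => Real.exp (-(y ^ 2) / 2)) = fun y => Real.exp (-(1/2 : ℝ) * y ^ 2) := by
  ext y; ring_nf

lemma integrable_stdGauss : Integrable (fun y : ℝ => Real.exp (-(y ^ 2) / 2)) := by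
  rw [stdGauss_eq]; exact integrable_exp_neg_mul_sq (by norm_num)

lemma integral_stdGauss : ∫ y : ℝ, Real.exp (-(y ^ 2) / 2) = Real.sqrt (2 * π) := by
  rw [stdGauss_eq, integral_gaussian]
  norm_num
  exact mul_comm _ _

lemma sqrt_two_pi_pos : 0 < Real.sqrt (2 * π) := Real.sqrt_pos.2 (by positivity)

lemma stdNormalCDF_pos (x : ℝ) : 0 < stdNormalCDF x := by
  unfold stdNormalCDF
  refine mul_pos (inv_pos.2 sqrt_two_pi_pos) ?_
  rw [setIntegral_pos_iff_support_of_nonneg_ae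
    (ae_of_all _ fun y => (Real.exp_pos _).le) integrable_stdGauss.integrableOn]
  have hsupp : Function.support (fun y : ℝ => Real.exp (-(y ^ 2) / 2)) = Set.univ := by
    ext y; simp [Function.support, (Real.exp_pos _).ne']
  rw [hsupp, Set.univ_inter, Real.volume_Iic]
  exact ENNReal.zero_lt_top

lemma stdNormalCDF_le_one (x : ℝ) : stdNormalCDF x ≤ 1 := by
  unfold stdNormalCDF
  have h := setIntegral_le_integral (μ := volume) (s := Set.Iic x) integrable_stdGauss
    (ae_of_all _ fun y => (Real.exp_pos _).le)
  rw [integral_stdGauss] at h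
  calc (Real.sqrt (2 * π))⁻¹ * ∫ y in Set.Iic x, Real.exp (-(y ^ 2) / 2)
      ≤ (Real.sqrt (2 * π))⁻¹ * Real.sqrt (2 * π) := by
        exact mul_le_mul_of_nonneg_left h (inv_nonneg.2 (Real.sqrt_nonneg _))
    _ = 1 := inv_mul_cancel₀ sqrt_two_pi_pos.ne'

lemma stdNormalCDF_mono : Monotone stdNormalCDF := fun x y hxy => by
  unfold stdNormalCDF
  refine mul_le_mul_of_nonneg_left ?_ (inv_nonneg.2 (Real.sqrt_nonneg _))
  exact setIntegral_mono_set integrable_stdGauss.integrableOn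
    (ae_of_all _ fun z => (Real.exp_pos _).le)
    (HasSubset.Subset.eventuallyLE (Set.Iic_subset_Iic.2 hxy))

lemma stdNormalCDF_measurable : Measurable stdNormalCDF := stdNormalCDF_mono.measurable

lemma integral_Ioi_stdGauss (u : ℝ) :
    ∫ y in Set.Ioi u, Real.exp (-(y ^ 2) / 2) = Real.sqrt (2 * π) * (1 - stdNormalCDF u) := by
  have h := intervalIntegral.integral_Iic_add_Ioi (μ := volume) (b := u)
    integrable_stdGauss.integrableOn integrable_stdGauss.integrableOn
  rw [integral_stdGauss] at h
  unfold stdNormalCDF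
  rw [mul_sub, mul_one, mul_inv_cancel_left₀ sqrt_two_pi_pos.ne']
  linarith

lemma integral_gauss_Ioi (κ m s : ℝ) (hκ : 0 < κ) :
    ∫ x in Set.Ioi s, Real.exp (-(x - m) ^ 2 / (2 * κ ^ 2))
      = κ * (Real.sqrt (2 * π) * (1 - stdNormalCDF ((s - m) / κ))) := by
  have hemb : MeasurableEmbedding (fun x : ℝ => x - m) :=
    (MeasurableEquiv.subRight m).measurableEmbedding
  have hpre : (fun x : ℝ => x - m) ⁻¹' Set.Ioi (s - m) = Set.Ioi s := by
    ext x; simp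
  have h1 : ∫ x in Set.Ioi s, Real.exp (-(x - m) ^ 2 / (2 * κ ^ 2))
      = ∫ x in Set.Ioi (s - m), Real.exp (-x ^ 2 / (2 * κ ^ 2)) := by
    rw [← hpre]
    exact (measurePreserving_sub_right volume m).setIntegral_preimage_emb hemb
      (fun x => Real.exp (-x ^ 2 / (2 * κ ^ 2))) _
  have h2 := integral_comp_mul_left_Ioi
    (fun x => Real.exp (-x ^ 2 / (2 * κ ^ 2))) ((s - m) / κ) hκ
  rw [mul_div_cancel₀ _ hκ.ne'] at h2
  have h3 : ∀ y : ℝ, Real.exp (-(κ * y) ^ 2 / (2 * κ ^ 2)) = Real.exp (-(y ^ 2) / 2) := by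
    intro y; congr 1; field_simp
  simp only [h3, smul_eq_mul] at h2
  rw [h1, ← integral_Ioi_stdGauss, h2, mul_inv_cancel_left₀ hκ.ne']

/-- Corollary 4: the exact outage probability of the typical user in single-integral
form.  `A` models the CUMA signal power and `B` the interference-plus-noise power
(a truncated Gaussian shifted by the noise term `c`). -/
theorem cuma_outage_probability_single_integral {Ω : Type*} [MeasureSpace Ω]
    [IsProbabilityMeasure (ℙ : Measure Ω)]
    (μn W : ℕ) (hμ2 : 2 ≤ μn) (hμe : Even μn) (hW : 1 ≤ W)
    (V ζ ω κ c : ℝ) (hV : V = Real.sin (π / μn) / W)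
    (hζ : 0 < ζ) (hω : 0 < ω) (hκ : 0 < κ) (hc : 0 ≤ c)
    (A B : Ω → ℝ) (hindep : IndepFun A B ℙ)
    (hlawA : Measure.map A ℙ = volume.withDensity (fun α => ENNReal.ofReal
        (if α ∈ Set.Icc (Real.cos (π / μn) ^ 2 * ζ / V ^ 2) (ζ / V ^ 2)
          then μn / (2 * π) * Real.sqrt (V ^ 2 / (ζ * α - V ^ 2 * α ^ 2))
          else 0)))
    (hlawB : Measure.map B ℙ = volume.withDensity (fun x => ENNReal.ofReal
        (if c ≤ x
          then (stdNormalCDF (ω / κ) * Real.sqrt (2 * π * κ ^ 2))⁻¹ *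
            Real.exp (-(x - ω - c) ^ 2 / (2 * κ ^ 2))
          else 0)))
    (γ : ℝ) (hγ : 0 < γ) (hγc : c ≤ Real.cos (π / μn) ^ 2 * ζ / (γ * V ^ 2)) :
    (ℙ {x | A x / B x ≤ γ}).toReal
      = 1 / stdNormalCDF (ω / κ)
        - μn / (2 * π * stdNormalCDF (ω / κ)) *
          ∫ α in (Real.cos (π / μn) ^ 2 * ζ / V ^ 2)..(ζ / V ^ 2),
            Real.sqrt (V ^ 2 / (ζ * α - V ^ 2 * α ^ 2)) *
              stdNormalCDF ((α / γ - ω - c) / κ) := by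
  have hπ := Real.pi_pos
  have hμ2R : (2 : ℝ) ≤ (μn : ℝ) := by exact_mod_cast hμ2
  have hWR : (0 : ℝ) < (W : ℝ) := by exact_mod_cast hW
  have hsin : 0 < Real.sin (π / μn) := by
    apply Real.sin_pos_of_pos_of_lt_pi
    · positivity
    · exact div_lt_self hπ (by linarith)
  have hVpos : 0 < V := hV ▸ div_pos hsin hWR
  have hV2 : (0 : ℝ) < V ^ 2 := by positivity
  have hcos2 : Real.cos (π / μn) ^ 2 < 1 := by
    nlinarith [Real.sin_sq_add_cos_sq (π / μn)]
  set Φω := stdNormalCDF (ω / κ) with hΦdef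
  have hΦpos : 0 < Φω := stdNormalCDF_pos _
  set a := Real.cos (π / μn) ^ 2 * ζ / V ^ 2 with hadef
  set b := ζ / V ^ 2 with hbdef
  have hab : a < b := by
    rw [hadef, hbdef]
    exact (div_lt_div_iff_of_pos_right hV2).mpr (by nlinarith)
  have ha0 : 0 ≤ a := by rw [hadef]; positivity
  set f : ℝ → ℝ := fun α =>
    if α ∈ Set.Icc a b then (μn : ℝ) / (2 * π) * Real.sqrt (V ^ 2 / (ζ * α - V ^ 2 * α ^ 2))
    else 0 with hfdef
  set g : ℝ → ℝ := fun x =>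
    if c ≤ x then (Φω * Real.sqrt (2 * π * κ ^ 2))⁻¹ * Real.exp (-(x - ω - c) ^ 2 / (2 * κ ^ 2))
    else 0 with hgdef
  have hlawA' : Measure.map A ℙ = volume.withDensity (fun α => ENNReal.ofReal (f α)) := hlawA
  have hlawB' : Measure.map B ℙ = volume.withDensity (fun x => ENNReal.ofReal (g x)) := hlawB
  clear hlawA hlawB
  have hf0 : ∀ α, 0 ≤ f α := by
    intro α; rw [hfdef]; dsimp only
    split
    · positivity
    · exact le_refl 0
  have hg0 : ∀ x, 0 ≤ g x := by
    intro x; rw [hgdef]; dsimp only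
    split
    · positivity
    · exact le_refl 0
  have msqrt : Measurable fun α : ℝ => Real.sqrt (V ^ 2 / (ζ * α - V ^ 2 * α ^ 2)) := by
    apply Real.continuous_sqrt.measurable.comp
    exact measurable_const.div (by fun_prop)
  have mf : Measurable f := by
    rw [hfdef]
    exact Measurable.ite measurableSet_Icc (measurable_const.mul msqrt) measurable_const
  have mg : Measurable g := by
    rw [hgdef]
    exact Measurable.ite (measurableSet_Ici (a := c))
      (measurable_const.mul (Real.measurable_exp.comp (by fun_prop))) measurable_const
  -- positivity of f on the open interval
  have hfpos : ∀ x ∈ Set.Ioo a b, 0 < f x := by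
    intro x hx
    have hx1 : x ∈ Set.Icc a b := Set.Ioo_subset_Icc_self hx
    rw [hfdef]; dsimp only; rw [if_pos hx1]
    have hx0 : 0 < x := lt_of_le_of_lt ha0 hx.1
    have hxb : x < b := hx.2
    have hden : 0 < ζ * x - V ^ 2 * x ^ 2 := by
      have : V ^ 2 * x < ζ := by
        have := (lt_div_iff₀ hV2).mp (hbdef ▸ hxb)
        linarith
      nlinarith
    have : 0 < V ^ 2 / (ζ * x - V ^ 2 * x ^ 2) := by positivity
    have hsq := Real.sqrt_pos.mpr this
    positivity
  -- positivity of g beyond c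
  have hgpos : ∀ x ∈ Set.Ioo c (c + 1), 0 < g x := by
    intro x hx
    rw [hgdef]; dsimp only; rw [if_pos hx.1.le]
    have h1 : 0 < Real.sqrt (2 * π * κ ^ 2) := Real.sqrt_pos.mpr (by positivity)
    positivity
  -- a.e.-measurability of A and B
  have haemeas : ∀ (X : Ω → ℝ) (h : ℝ → ℝ) (u v : ℝ), u < v → (∀ x ∈ Set.Ioo u v, 0 < h x) →
      Measurable h →
      Measure.map X ℙ = volume.withDensity (fun x => ENNReal.ofReal (h x)) → AEMeasurable X ℙ := by
    intro X h u v huv hpos hm hlaw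
    by_contra hX
    have h0 : Measure.map X ℙ = 0 := Measure.map_of_not_aemeasurable hX
    rw [h0] at hlaw
    have h1 : volume.withDensity (fun x => ENNReal.ofReal (h x)) (Set.Ioo u v) = 0 := by
      rw [← hlaw]; simp
    rw [withDensity_apply _ measurableSet_Ioo,
      lintegral_eq_zero_iff hm.ennreal_ofReal] at h1
    have h1' : ∀ᵐ x ∂(volume : Measure ℝ), x ∈ Set.Ioo u v → ENNReal.ofReal (h x) = 0 :=
      (ae_restrict_iff' measurableSet_Ioo).mp h1
    have h2 : volume (Set.Ioo u v) = 0 := by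
      refine measure_mono_null ?_ (ae_iff.mp h1')
      intro x hx hcontra
      have h3 := hcontra hx
      simp only [Pi.zero_apply, ENNReal.ofReal_eq_zero] at h3
      exact absurd h3 (not_le.mpr (hpos x hx))
    rw [Real.volume_Ioo] at h2
    simp only [ENNReal.ofReal_eq_zero, sub_nonpos] at h2
    exact absurd h2 (not_le.mpr huv)
  have hAae : AEMeasurable A ℙ := haemeas A f a b hab hfpos mf hlawA'
  have hBae : AEMeasurable B ℙ := haemeas B g c (c + 1) (by linarith) hgpos mg hlawB'
  have hPA : IsProbabilityMeasure (Measure.map A ℙ) := Measure.isProbabilityMeasure_map hAae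
  have hPB : IsProbabilityMeasure (Measure.map B ℙ) := Measure.isProbabilityMeasure_map hBae
  -- total masses
  have hftot : ∫⁻ x, ENNReal.ofReal (f x) = 1 := by
    have h1 := hPA.measure_univ
    rw [hlawA', withDensity_apply _ MeasurableSet.univ, Measure.restrict_univ] at h1
    exact h1
  have hgtot : ∫⁻ x, ENNReal.ofReal (g x) = 1 := by
    have h1 := hPB.measure_univ
    rw [hlawB', withDensity_apply _ MeasurableSet.univ, Measure.restrict_univ] at h1
    exact h1
  -- integrability
  have hfint : Integrable f := by
    refine ⟨mf.aestronglyMeasurable, ?_⟩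
    rw [hasFiniteIntegral_iff_ofReal (ae_of_all _ hf0), hftot]
    exact ENNReal.one_lt_top
  have hgint : Integrable g := by
    refine ⟨mg.aestronglyMeasurable, ?_⟩
    rw [hasFiniteIntegral_iff_ofReal (ae_of_all _ hg0), hgtot]
    exact ENNReal.one_lt_top
  have hfint1 : ∫ x, f x = 1 := by
    rw [integral_eq_lintegral_of_nonneg_ae (ae_of_all _ hf0) mf.aestronglyMeasurable, hftot]
    simp
  -- B is a.e. positive
  have hB0 : ∀ᵐ x ∂ℙ, 0 < B x := by
    rw [ae_iff]
    have hset : {x | ¬ 0 < B x} = B ⁻¹' (Set.Iic 0) := by ext x; simp [not_lt]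
    rw [hset, ← Measure.map_apply_of_aemeasurable hBae measurableSet_Iic, hlawB',
      withDensity_apply _ measurableSet_Iic]
    have hzero : ∀ᵐ x ∂(volume.restrict (Set.Iic 0)), ENNReal.ofReal (g x) = 0 := by
      have h0 : ∀ᵐ x : ℝ ∂volume, x ≠ 0 := by
        refine ae_iff.mpr ?_
        have : {x : ℝ | ¬ x ≠ 0} = {0} := by ext x; simp
        rw [this]
        exact Real.volume_singleton
      filter_upwards [ae_restrict_mem measurableSet_Iic, ae_restrict_of_ae h0] with x hx hne
      have : ¬ c ≤ x := by
        intro hcx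
        have : x = 0 := le_antisymm hx (hc.trans hcx)
        exact hne this
      rw [hgdef]; dsimp only; rw [if_neg this]
      simp
    rw [lintegral_congr_ae hzero]
    simp
  -- reduce to A ≤ γ B
  have hsets : ℙ {x | A x / B x ≤ γ} = ℙ {x | A x ≤ γ * B x} := by
    apply measure_congr
    filter_upwards [hB0] with x hx
    show (A x / B x ≤ γ) = (A x ≤ γ * B x)
    exact eq_iff_iff.mpr (div_le_iff₀ hx)
  -- joint law
  have hS : MeasurableSet {p : ℝ × ℝ | p.1 ≤ γ * p.2} :=
    measurableSet_le measurable_fst (measurable_const.mul measurable_snd)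
  have hmap : ℙ {x | A x ≤ γ * B x}
      = ((Measure.map A ℙ).prod (Measure.map B ℙ)) {p : ℝ × ℝ | p.1 ≤ γ * p.2} := by
    rw [← (indepFun_iff_map_prod_eq_prod_map_map hAae hBae).mp hindep,
      Measure.map_apply_of_aemeasurable (hAae.prodMk hBae) hS]
    rfl
  have hsec : ∀ α : ℝ, (Prod.mk α ⁻¹' {p : ℝ × ℝ | p.1 ≤ γ * p.2}) = Set.Ici (α / γ) := by
    intro α; ext x
    simp only [Set.mem_preimage, Set.mem_setOf_eq, Set.mem_Ici]
    rw [div_le_iff₀ hγ, mul_comm]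
  have hprod : ((Measure.map A ℙ).prod (Measure.map B ℙ)) {p : ℝ × ℝ | p.1 ≤ γ * p.2}
      = ∫⁻ α, (Measure.map B ℙ) (Set.Ici (α / γ)) ∂(Measure.map A ℙ) := by
    rw [Measure.prod_apply hS]
    simp_rw [hsec]
  have hmeasF : Measurable fun α : ℝ => (Measure.map B ℙ) (Set.Ici (α / γ)) := by
    have hanti : Antitone fun t : ℝ => (Measure.map B ℙ) (Set.Ici t) := fun s t hst =>
      measure_mono (Set.Ici_subset_Ici.2 hst)
    exact hanti.measurable.comp (measurable_id.div_const γ)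
  have hwd : ∫⁻ α, (Measure.map B ℙ) (Set.Ici (α / γ)) ∂(Measure.map A ℙ)
      = ∫⁻ α, ENNReal.ofReal (f α) * (Measure.map B ℙ) (Set.Ici (α / γ)) := by
    rw [hlawA', lintegral_withDensity_eq_lintegral_mul _ mf.ennreal_ofReal hmeasF]
    rfl
  -- the tail formula for B
  have hν : ∀ t : ℝ, c ≤ t → (Measure.map B ℙ) (Set.Ici t)
      = ENNReal.ofReal ((1 - stdNormalCDF ((t - ω - c) / κ)) / Φω) := by
    intro t ht
    rw [hlawB', withDensity_apply _ measurableSet_Ici,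
      ← ofReal_integral_eq_lintegral_ofReal hgint.integrableOn (ae_of_all _ hg0)]
    congr 1
    have hc1 : ∫ x in Set.Ici t, g x
        = ∫ x in Set.Ici t,
            (Φω * Real.sqrt (2 * π * κ ^ 2))⁻¹ * Real.exp (-(x - ω - c) ^ 2 / (2 * κ ^ 2)) := by
      apply setIntegral_congr_fun measurableSet_Ici
      intro x hx
      rw [hgdef]; dsimp only; rw [if_pos (ht.trans hx)]
    rw [hc1, integral_const_mul, integral_Ici_eq_integral_Ioi]
    have hc2 : ∀ x : ℝ, Real.exp (-(x - ω - c) ^ 2 / (2 * κ ^ 2))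
        = Real.exp (-(x - (ω + c)) ^ 2 / (2 * κ ^ 2)) := by
      intro x; rw [sub_sub]
    simp_rw [hc2]
    rw [integral_gauss_Ioi κ (ω + c) t hκ]
    have hsq : Real.sqrt (2 * π * κ ^ 2) = Real.sqrt (2 * π) * κ := by
      rw [Real.sqrt_mul (by positivity), Real.sqrt_sq hκ.le]
    rw [hsq, ← sub_sub]
    have h2π : (0:ℝ) < Real.sqrt (2 * π) := Real.sqrt_pos.2 (by positivity)
    field_simp
  -- merge pointwise
  have hptwise : ∀ α : ℝ, ENNReal.ofReal (f α) * (Measure.map B ℙ) (Set.Ici (α / γ))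
      = ENNReal.ofReal (f α * ((1 - stdNormalCDF ((α / γ - ω - c) / κ)) / Φω)) := by
    intro α
    by_cases hα : α ∈ Set.Icc a b
    · rw [hν (α / γ) ?_, ← ENNReal.ofReal_mul (hf0 α)]
      have h1 : a / γ ≤ α / γ := (div_le_div_iff_of_pos_right hγ).mpr hα.1
      have h2 : c ≤ a / γ := by
        rw [hadef, div_div]
        rw [mul_comm γ (V ^ 2)] at hγc
        exact hγc
      linarith
    · have hz : f α = 0 := by rw [hfdef]; dsimp only; rw [if_neg hα]
      rw [hz]
      simp
  set H : ℝ → ℝ := fun α => f α * ((1 - stdNormalCDF ((α / γ - ω - c) / κ)) / Φω) with hHdef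
  have hΦm : Measurable fun α : ℝ => stdNormalCDF ((α / γ - ω - c) / κ) := by
    apply stdNormalCDF_measurable.comp
    fun_prop
  have hHmeas : Measurable H := by
    rw [hHdef]
    exact mf.mul ((measurable_const.sub hΦm).div_const Φω)
  have hH0 : ∀ α, 0 ≤ H α := by
    intro α
    exact mul_nonneg (hf0 α)
      (div_nonneg (by linarith [stdNormalCDF_le_one ((α / γ - ω - c) / κ)]) hΦpos.le)
  have hkey : ℙ {x | A x / B x ≤ γ} = ∫⁻ α, ENNReal.ofReal (H α) := by
    rw [hsets, hmap, hprod, hwd]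
    exact lintegral_congr hptwise
  rw [hkey, ← integral_eq_lintegral_of_nonneg_ae (ae_of_all _ hH0) hHmeas.aestronglyMeasurable]
  -- now compute the real integral
  set q : ℝ → ℝ := fun α => Real.sqrt (V ^ 2 / (ζ * α - V ^ 2 * α ^ 2)) with hqdef
  have hq0 : ∀ α, 0 ≤ q α := fun α => Real.sqrt_nonneg _
  have hsplit : ∫ α, H α = ∫ α in Set.Icc a b, H α := by
    symm
    apply setIntegral_eq_integral_of_forall_compl_eq_zero
    intro x hx
    rw [hHdef]; dsimp only
    have hz : f x = 0 := by rw [hfdef]; dsimp only; rw [if_neg hx]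
    rw [hz, zero_mul]
  -- integrability of q on Icc
  have hconst_int : IntegrableOn (fun α => (μn : ℝ) / (2 * π) * q α) (Set.Icc a b) := by
    apply (hfint.integrableOn (s := Set.Icc a b)).congr_fun ?_ measurableSet_Icc
    intro x hx
    rw [hfdef]; dsimp only; rw [if_pos hx]
  have hqint : IntegrableOn q (Set.Icc a b) := by
    have h2 := hconst_int.const_mul ((2 * π) / (μn : ℝ))
    have h3 : (fun α => (2 * π) / (μn : ℝ) * ((μn : ℝ) / (2 * π) * q α)) = q := by
      funext α
      field_simp
    rwa [h3] at h2
  have hqm : Measurable q := hqdef ▸ msqrt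
  have hqΦint : IntegrableOn
      (fun α => q α * stdNormalCDF ((α / γ - ω - c) / κ)) (Set.Icc a b) := by
    apply Integrable.mono hqint ((hqm.mul hΦm).aestronglyMeasurable.restrict)
    apply ae_of_all
    intro x
    rw [Real.norm_eq_abs, Real.norm_eq_abs, abs_of_nonneg (hq0 x), Pi.mul_apply,
      abs_of_nonneg (mul_nonneg (hq0 x) (stdNormalCDF_pos _).le)]
    exact mul_le_of_le_one_right (hq0 x) (stdNormalCDF_le_one _)
  have hIcc : ∫ α in Set.Icc a b, H α
      = (μn : ℝ) / (2 * π) * Φω⁻¹ *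
        ((∫ α in Set.Icc a b, q α)
          - ∫ α in Set.Icc a b, q α * stdNormalCDF ((α / γ - ω - c) / κ)) := by
    have hcongr : ∫ α in Set.Icc a b, H α
        = ∫ α in Set.Icc a b, (μn : ℝ) / (2 * π) * Φω⁻¹ *
            (q α - q α * stdNormalCDF ((α / γ - ω - c) / κ)) := by
      apply setIntegral_congr_fun measurableSet_Icc
      intro x hx
      rw [hHdef]; dsimp only
      rw [hfdef]; dsimp only; rw [if_pos hx]
      ring
    rw [hcongr, integral_const_mul]
    congr 1
    exact integral_sub hqint hqΦint
  have hI1 : (μn : ℝ) / (2 * π) * ∫ α in Set.Icc a b, q α = 1 := by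
    rw [← integral_const_mul, ← hfint1]
    symm
    have h1 : ∫ x, f x = ∫ x in Set.Icc a b, f x := by
      symm
      apply setIntegral_eq_integral_of_forall_compl_eq_zero
      intro x hx
      rw [hfdef]; dsimp only; rw [if_neg hx]
    rw [h1]
    apply setIntegral_congr_fun measurableSet_Icc
    intro x hx
    rw [hfdef]; dsimp only; rw [if_pos hx]
  rw [hsplit, hIcc, intervalIntegral.integral_of_le hab.le, ← integral_Icc_eq_integral_Ioc]
  linear_combination Φω⁻¹ * hI1
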